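/- For every q ≥ 2 and every digraph G, if the q-guessing number g(G,q) ≥ 1 then the q-strict guessing number h(G,q) ≥ 1; i.e., if some coding function over an alphabet of size q whose interaction graph is a subgraph of G has at least q fixed points, then some coding function with interaction graph exactly G has at least q fixed points. -/
import Mathlib


/-- Arc `(u,i)` of the interaction graph of a coding function `f`. -/
def arcCF {V A : Type*} [DecidableEq V] (f : (V → A) → V → A) (u i : V) : Prop :=
  ∃ (x : V → A) (a : A), f (Function.update x u a) i ≠ f x i


section helpers
set_option linter.unusedSectionVars false
variable {V A : Type*} [Fintype V] [DecidableEq V]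

lemma not_arc_inv (f : (V → A) → V → A) {u i : V} (h : ¬ arcCF f u i) :
    ∀ x a, f (Function.update x u a) i = f x i := by
  intro x a; by_contra hc; exact h ⟨x, a, hc⟩

lemma locality_aux (f : (V → A) → V → A) (i : V) (s : Finset V) :
    ∀ x y : V → A, (∀ u, x u ≠ y u → u ∈ s ∧ ¬ arcCF f u i) → f x i = f y i := by
  induction s using Finset.strongInductionOn with
  | _ s ih =>
    intro x y hxy
    by_cases hd : ∀ u, x u = y u
    · rw [funext hd]
    · push_neg at hd; obtain ⟨u, hu⟩ := hd
      obtain ⟨hus, hnarc⟩ := hxy u hu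
      have h1 : f (Function.update x u (y u)) i = f x i := not_arc_inv f hnarc x (y u)
      rw [← h1]
      refine ih (s.erase u) (Finset.erase_ssubset hus) _ _ ?_
      intro v hv
      have hvu : v ≠ u := by rintro rfl; simp [Function.update_self] at hv
      rw [Function.update_of_ne hvu] at hv
      exact ⟨Finset.mem_erase.mpr ⟨hvu, (hxy v hv).1⟩, (hxy v hv).2⟩

lemma locality (f : (V → A) → V → A) (i : V) (x y : V → A)
    (h : ∀ u, x u ≠ y u → ¬ arcCF f u i) : f x i = f y i :=
  locality_aux f i Finset.univ x y (fun u hu => ⟨Finset.mem_univ u, h u hu⟩)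

lemma wf_of_acyclic (G : V → V → Prop) (h : ∀ c, ¬ Relation.TransGen G c c) :
    WellFounded G := by
  haveI : IsTrans V (Relation.TransGen G) := ⟨fun a b c => Relation.TransGen.trans⟩
  haveI : IsIrrefl V (Relation.TransGen G) := ⟨h⟩
  exact Subrelation.wf (fun {a b} hab => Relation.TransGen.single hab)
    (Finite.wellFounded_of_trans_of_irrefl _)

lemma unique_fix {G : V → V → Prop} (hwf : WellFounded G) (f : (V → A) → V → A)
    (hsub : ∀ u i, arcCF f u i → G u i) {x y : V → A}
    (hx : f x = x) (hy : f y = y) : x = y := by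
  funext i
  refine hwf.induction (C := fun i => x i = y i) i ?_
  intro j ih
  have hl : f x j = f y j := locality f j x y (fun u hu harc => hu (ih u (hsub u j harc)))
  rw [congrFun hx j, congrFun hy j] at hl
  exact hl

end helpers

/-- If some coding function over an alphabet `A` of size `q ≥ 2` whose interaction
graph is a subgraph of `G` has at least `q` fixed points (i.e. `g(G,q) ≥ 1`), then
some coding function with interaction graph exactly `G` has at least `q` fixed
points (i.e. `h(G,q) ≥ 1`). -/



theorem stmt12 {V A : Type*} [Fintype V] [DecidableEq V] [Fintype A]
    (G : V → V → Prop) (hq : 2 ≤ Fintype.card A)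
    (h : ∃ f : (V → A) → V → A, (∀ u i, arcCF f u i → G u i) ∧
      Fintype.card A ≤ Set.ncard {x : V → A | f x = x}) :
    ∃ f : (V → A) → V → A, (∀ u i, arcCF f u i ↔ G u i) ∧
      Fintype.card A ≤ Set.ncard {x : V → A | f x = x} := by
  classical
  obtain ⟨f, hsub, hcard⟩ := h
  -- a fixed-point-free injection σ : A → A
  haveI : NeZero (Fintype.card A) := ⟨by omega⟩
  haveI : Fact (1 < Fintype.card A) := ⟨hq⟩
  let e : A ≃ ZMod (Fintype.card A) := Fintype.equivOfCardEq (by rw [ZMod.card])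
  let σ : A → A := fun a => e.symm (e a + 1)
  have hσne : ∀ a, σ a ≠ a := by
    intro a hcon
    have h1 := congrArg e hcon
    simp only [σ, Equiv.apply_symm_apply] at h1
    have : (1 : ZMod (Fintype.card A)) = 0 := by
      have := add_left_cancel (a := e a) (b := (1:ZMod (Fintype.card A))) (c := 0)
        (by simpa using h1)
      exact this
    exact one_ne_zero this
  have hσinj : Function.Injective σ := by
    intro a b hab
    have h1 := congrArg e hab
    simp only [σ, Equiv.apply_symm_apply] at h1
    exact e.injective (add_right_cancel h1)
  -- a fixed point of f
  have hfixne : {x : V → A | f x = x}.Nonempty := by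
    apply Set.nonempty_of_ncard_ne_zero; omega
  obtain ⟨xs, hxs⟩ := hfixne
  simp only [Set.mem_setOf_eq] at hxs
  -- the set R of vertices reachable from a cycle
  set R : Set V := {i | ∃ c, Relation.TransGen G c c ∧ Relation.ReflTransGen G c i} with hR
  have hA : ∀ i ∈ R, ∃ u, G u i ∧ u ∈ R := by
    rintro i ⟨c, hc, hci⟩
    rcases Relation.ReflTransGen.cases_tail hci with heq | ⟨u, hcu, hui⟩
    · subst heq
      obtain ⟨u, hcu, hui⟩ := Relation.TransGen.tail'_iff.mp hc
      exact ⟨u, hui, i, hc, hcu⟩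
    · exact ⟨u, hui, c, hc, hcu⟩
  have hB : ∀ i, i ∉ R → ∀ u, G u i → u ∉ R := by
    intro i hi u hGu hu
    obtain ⟨c, hc, hcu⟩ := hu
    exact hi ⟨c, hc, hcu.tail hGu⟩
  have hRne : R.Nonempty := by
    by_contra hcon
    rw [Set.not_nonempty_iff_eq_empty] at hcon
    have hnc : ∀ c, ¬ Relation.TransGen G c c := by
      intro c hc
      have : c ∈ R := ⟨c, hc, Relation.ReflTransGen.refl⟩
      rw [hcon] at this; exact this
    have hwf := wf_of_acyclic G hnc
    have h2 : 1 < {x : V → A | f x = x}.ncard := by omega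
    rw [Set.one_lt_ncard_iff (Set.toFinite _)] at h2
    obtain ⟨x, y, hx, hy, hxy⟩ := h2
    exact hxy (unique_fix hwf f hsub hx hy)
  obtain ⟨i0, hi0⟩ := hRne
  -- choose a predecessor in R for each vertex of R
  let p : V → V := fun i => if h : i ∈ R then (hA i h).choose else i
  have hpG : ∀ i ∈ R, G (p i) i := by
    intro i hi; simp only [p, dif_pos hi]; exact (hA i hi).choose_spec.1
  have hpR : ∀ i ∈ R, p i ∈ R := by
    intro i hi; simp only [p, dif_pos hi]; exact (hA i hi).choose_spec.2
  -- distinguished element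
  let a0 : A := xs i0
  -- the construction
  let cond : V → (V → A) → Prop := fun u x => x u ≠ (if u ∈ R then a0 else xs u)
  let k : V → (V → A) → ℕ := fun i x =>
    (Finset.univ.filter (fun u => G u i ∧ ¬ arcCF f u i ∧ x u ≠ xs u)).card
  let f' : (V → A) → V → A := fun x i =>
    if i ∈ R then
      (if (x (p i) = a0 ∧ (∃ u, G u i ∧ u ≠ p i) ∧ ∀ u, G u i → u ≠ p i → cond u x)
        then σ (x (p i)) else x (p i))
    else σ^[k i x] (f x i)
  -- designated fixed points
  let ψ : A → V → A := fun t v => if v ∈ R then t else xs v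
  have hψfix : ∀ t, f' (ψ t) = ψ t := by
    intro t; funext i
    by_cases hi : i ∈ R
    · simp only [f', if_pos hi]
      have hpv : ψ t (p i) = t := by simp [ψ, hpR i hi]
      rw [hpv]
      rw [if_neg]
      · simp [ψ, hi]
      · rintro ⟨h1, ⟨u, hGu, hne⟩, hall⟩
        have hc := hall u hGu hne
        simp only [cond, ψ] at hc
        by_cases huR : u ∈ R
        · simp [huR, h1] at hc
        · simp [huR] at hc
    · simp only [f', if_neg hi]
      have hψi : ψ t i = xs i := by simp [ψ, hi]
      have hk : k i (ψ t) = 0 := by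
        simp only [k, Finset.card_eq_zero, Finset.filter_eq_empty_iff]
        intro u _
        rintro ⟨hGu, -, hne⟩
        exact hne (by simp [ψ, hB i hi u hGu])
      have hfψ : f (ψ t) i = xs i := by
        have : f (ψ t) i = f xs i := by
          apply locality
          intro u hu harc
          apply hu
          have hGu := hsub u i harc
          simp [ψ, hB i hi u hGu]
        rw [this, congrFun hxs i]
      rw [hk, hfψ, Function.iterate_zero_apply, hψi]
  refine ⟨f', ?_, ?_⟩
  · intro u i
    constructor
    · -- arcCF f' u i → G u i
      intro harc
      by_contra hnG
      obtain ⟨x, a, hne⟩ := harc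
      apply hne
      by_cases hi : i ∈ R
      · have hupd : ∀ v, G v i → Function.update x u a v = x v := by
          intro v hv
          exact Function.update_of_ne (by rintro rfl; exact hnG hv) _ _
        simp only [f', if_pos hi]
        rw [hupd (p i) (hpG i hi)]
        have hiff : ((x (p i) = a0 ∧ (∃ w, G w i ∧ w ≠ p i) ∧
              ∀ w, G w i → w ≠ p i → cond w (Function.update x u a))
            ↔ (x (p i) = a0 ∧ (∃ w, G w i ∧ w ≠ p i) ∧
              ∀ w, G w i → w ≠ p i → cond w x)) := by
          refine and_congr_right fun _ => and_congr_right fun _ => ?_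
          refine forall_congr' fun w => ?_
          refine imp_congr_right fun hw => imp_congr_right fun _ => ?_
          simp only [cond]
          rw [hupd w hw]
        rw [if_congr hiff rfl rfl]
      · simp only [f', if_neg hi]
        have hf : f (Function.update x u a) i = f x i :=
          not_arc_inv f (fun hc => hnG (hsub u i hc)) x a
        have hcond : ∀ v, (G v i ∧ ¬ arcCF f v i ∧ Function.update x u a v ≠ xs v)
            ↔ (G v i ∧ ¬ arcCF f v i ∧ x v ≠ xs v) := by
          intro v
          by_cases hvu : v = u
          · subst hvu
            constructor <;> (rintro ⟨hG, -, -⟩; exact absurd hG hnG)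
          · rw [Function.update_of_ne hvu]
        have hk : k i (Function.update x u a) = k i x := by
          simp only [k]
          congr 1
          ext v
          simp only [Finset.mem_filter, hcond v]
        rw [hk, hf]
    · -- G u i → arcCF f' u i
      intro hGui
      by_cases hi : i ∈ R
      · by_cases hex : ∃ w, G w i ∧ w ≠ p i
        · by_cases hu : u = p i
          · obtain ⟨w, hGw, hw⟩ := hex
            refine ⟨ψ a0, σ a0, ?_⟩
            rw [hu]
            have hx1 : ψ a0 (p i) = a0 := by simp [ψ, hpR i hi]
            have e1 : f' (Function.update (ψ a0) (p i) (σ a0)) i = σ a0 := by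
              simp only [f', if_pos hi]
              rw [if_neg, Function.update_self]
              rintro ⟨h1, -, -⟩
              rw [Function.update_self] at h1
              exact hσne a0 h1
            have e2 : f' (ψ a0) i = a0 := by
              simp only [f', if_pos hi]
              rw [if_neg, hx1]
              rintro ⟨-, -, hall⟩
              have hc := hall w hGw hw
              simp only [cond, ψ] at hc
              by_cases hwR : w ∈ R <;> simp [hwR] at hc
            rw [e1, e2]
            exact hσne a0
          · -- u ≠ p i
            set z : A := if u ∈ R then a0 else xs u with hz
            set χ : V → A := fun v => if v = p i then a0 else if v = u then z
              else if v ∈ R then σ a0 else σ (xs v) with hχ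
            have hχp : χ (p i) = a0 := by simp [χ]
            have hχu : χ u = z := by simp [χ, hu]
            refine ⟨χ, σ z, ?_⟩
            have hne2 : (p i) ≠ u := Ne.symm hu
            have e1 : f' (Function.update χ u (σ z)) i = σ a0 := by
              simp only [f', if_pos hi]
              rw [Function.update_of_ne hne2, hχp]
              rw [if_pos]
              refine ⟨rfl, ⟨u, hGui, hu⟩, ?_⟩
              intro v hGv hv
              simp only [cond]
              by_cases hvu : v = u
              · subst hvu
                rw [Function.update_self, ← hz]
                exact hσne z
              · rw [Function.update_of_ne hvu]
                have hχv : χ v = if v ∈ R then σ a0 else σ (xs v) := by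
                  simp [χ, hv, hvu]
                rw [hχv]
                by_cases hvR : v ∈ R
                · simp only [if_pos hvR]; exact hσne a0
                · simp only [if_neg hvR]; exact hσne (xs v)
            have e2 : f' χ i = a0 := by
              simp only [f', if_pos hi]
              rw [if_neg, hχp]
              rintro ⟨-, -, hall⟩
              have hc := hall u hGui hu
              simp only [cond] at hc
              rw [hχu, hz] at hc
              exact hc rfl
            rw [e1, e2]
            exact hσne a0
        · -- no extra in-neighbour: u = p i
          have hupi : u = p i := by
            by_contra hne
            exact hex ⟨u, hGui, hne⟩
          refine ⟨ψ a0, σ a0, ?_⟩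
          rw [hupi]
          have hx1 : ψ a0 (p i) = a0 := by simp [ψ, hpR i hi]
          have e1 : f' (Function.update (ψ a0) (p i) (σ a0)) i = σ a0 := by
            simp only [f', if_pos hi]
            rw [if_neg, Function.update_self]
            rintro ⟨-, hex2, -⟩
            exact hex hex2
          have e2 : f' (ψ a0) i = a0 := by
            simp only [f', if_pos hi]
            rw [if_neg, hx1]
            rintro ⟨-, hex2, -⟩
            exact hex hex2
          rw [e1, e2]
          exact hσne a0
      · -- i ∉ R
        by_cases harc : arcCF f u i
        · obtain ⟨x, a, hne⟩ := harc
          refine ⟨x, a, ?_⟩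
          simp only [f', if_neg hi]
          have hcond : ∀ v, (G v i ∧ ¬ arcCF f v i ∧ Function.update x u a v ≠ xs v)
              ↔ (G v i ∧ ¬ arcCF f v i ∧ x v ≠ xs v) := by
            intro v
            by_cases hvu : v = u
            · subst hvu
              constructor <;> (rintro ⟨-, hna, -⟩; exact absurd ⟨x, a, hne⟩ hna)
            · rw [Function.update_of_ne hvu]
          have hk : k i (Function.update x u a) = k i x := by
            simp only [k]
            congr 1
            ext v
            simp only [Finset.mem_filter, hcond v]
          rw [hk]
          intro hcon
          exact hne ((hσinj.iterate (k i x)) hcon)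
        · -- G u i but no f-arc
          refine ⟨xs, σ (xs u), ?_⟩
          simp only [f', if_neg hi]
          have hf : f (Function.update xs u (σ (xs u))) i = f xs i :=
            not_arc_inv f harc _ _
          have hins : Finset.univ.filter
                (fun v => G v i ∧ ¬ arcCF f v i ∧ Function.update xs u (σ (xs u)) v ≠ xs v)
              = insert u (Finset.univ.filter (fun v => G v i ∧ ¬ arcCF f v i ∧ xs v ≠ xs v)) := by
            ext v
            simp only [Finset.mem_filter, Finset.mem_insert, Finset.mem_univ, true_and]
            by_cases hvu : v = u
            · subst hvu
              simp [Function.update_self, hGui, harc, hσne (xs v)]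
            · rw [Function.update_of_ne hvu]
              simp [hvu]
          have hk : k i (Function.update xs u (σ (xs u))) = k i xs + 1 := by
            simp only [k]
            rw [hins, Finset.card_insert_of_notMem (by simp)]
          rw [hf, hk, Function.iterate_succ_apply']
          exact hσne _
  · -- fixed point count
    have hinj : Function.Injective ψ := by
      intro s t hst
      have hh := congrFun hst i0
      simpa [ψ, hi0] using hh
    have hsubset : Set.range ψ ⊆ {x | f' x = x} := by
      rintro x ⟨t, rfl⟩
      exact hψfix t
    calc Fintype.card A = Nat.card A := Nat.card_eq_fintype_card.symm
      _ = (Set.univ : Set A).ncard := (Set.ncard_univ A).symm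
      _ = (ψ '' Set.univ).ncard := (Set.ncard_image_of_injective _ hinj).symm
      _ = (Set.range ψ).ncard := by rw [Set.image_univ]
      _ ≤ _ := Set.ncard_le_ncard hsubset (Set.toFinite _)
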